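/- Let a and b be distinct positive real numbers. Then He(a,b) < A_{2/3}(a,b), where He is the Heronian mean and A_{2/3} is the power mean of order 2/3. -/

import Mathlib

lemma key_poly (x y : ℝ) (hx : 0 < x) (hy : 0 < y) (hxy : x ≠ y) :
    8 * (x^6 + y^6 + x^3 * y^3)^2 < 9 * (x^4 + y^4)^3 := by
  have hne : x - y ≠ 0 := sub_ne_zero.mpr hxy
  have h4 : 0 < (x - y)^4 := by positivity
  have hQ : 0 < x^8 + 4*x^7*y + 10*x^6*y^2 + 4*x^5*y^3 - 2*x^4*y^4
      + 4*x^3*y^5 + 10*x^2*y^6 + 4*x*y^7 + y^8 := by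
    nlinarith [sq_nonneg (x^4 - y^4), mul_pos (pow_pos hx 7) hy,
      mul_pos (pow_pos hx 6) (pow_pos hy 2), mul_pos (pow_pos hx 5) (pow_pos hy 3),
      mul_pos (pow_pos hx 3) (pow_pos hy 5), mul_pos (pow_pos hx 2) (pow_pos hy 6),
      mul_pos hx (pow_pos hy 7)]
  nlinarith [mul_pos h4 hQ]

theorem heronian_lt_power_mean_two_thirds (a b : ℝ) (ha : 0 < a) (hb : 0 < b) (hab : a ≠ b) :
    (a + b + Real.sqrt (a * b)) / 3 <
      ((a ^ (2 / 3 : ℝ) + b ^ (2 / 3 : ℝ)) / 2) ^ (3 / 2 : ℝ) := by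
  set x := a ^ (1/6 : ℝ) with hxdef
  set y := b ^ (1/6 : ℝ) with hydef
  have hx : 0 < x := Real.rpow_pos_of_pos ha _
  have hy : 0 < y := Real.rpow_pos_of_pos hb _
  have hxa : x ^ (6:ℕ) = a := by
    rw [hxdef, ← Real.rpow_natCast _ 6, ← Real.rpow_mul ha.le]; norm_num
  have hyb : y ^ (6:ℕ) = b := by
    rw [hydef, ← Real.rpow_natCast _ 6, ← Real.rpow_mul hb.le]; norm_num
  have hxy : x ≠ y := by
    intro h
    apply hab
    rw [← hxa, ← hyb, h]
  have ha23 : a ^ (2/3 : ℝ) = x ^ (4:ℕ) := by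
    rw [hxdef, ← Real.rpow_natCast _ 4, ← Real.rpow_mul ha.le]; norm_num
  have hb23 : b ^ (2/3 : ℝ) = y ^ (4:ℕ) := by
    rw [hydef, ← Real.rpow_natCast _ 4, ← Real.rpow_mul hb.le]; norm_num
  have hsqrt : Real.sqrt (a * b) = x ^ (3:ℕ) * y ^ (3:ℕ) := by
    rw [Real.sqrt_eq_rpow, Real.mul_rpow ha.le hb.le, hxdef, hydef,
      ← Real.rpow_natCast (a ^ (1/6:ℝ)) 3, ← Real.rpow_natCast (b ^ (1/6:ℝ)) 3,
      ← Real.rpow_mul ha.le, ← Real.rpow_mul hb.le]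
    norm_num
  rw [hsqrt, ha23, hb23, ← hxa, ← hyb]
  set c : ℝ := (x ^ (4:ℕ) + y ^ (4:ℕ)) / 2 with hc
  have hcpos : 0 < c := by positivity
  have hL : 0 ≤ (x ^ (6:ℕ) + y ^ (6:ℕ) + x ^ (3:ℕ) * y ^ (3:ℕ)) / 3 := by positivity
  have hsq : ((x ^ (6:ℕ) + y ^ (6:ℕ) + x ^ (3:ℕ) * y ^ (3:ℕ)) / 3) ^ 2
      < (c ^ (3/2 : ℝ)) ^ 2 := by
    have h2 : (c ^ (3/2 : ℝ)) ^ 2 = c ^ (3:ℕ) := by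
      rw [← Real.rpow_natCast (c ^ (3/2:ℝ)) 2, ← Real.rpow_mul hcpos.le,
        ← Real.rpow_natCast c 3]
      norm_num
    rw [h2, hc]
    have := key_poly x y hx hy hxy
    nlinarith [this]
  exact lt_of_pow_lt_pow_left₀ 2 (Real.rpow_nonneg hcpos.le _) hsq
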